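/- Let H: ℝ^n × ℝ^n → ℝ be a smooth Hamiltonian on T*ℝ^n ≅ ℝ^n × ℝ^n with coordinates (q^i, p_i), and let W: ℝ^n → ℝ be smooth with γ = dW, i.e. γ_i(q) = ∂W/∂q^i (so γ is a closed 1-form on ℝ^n). Define the Hamiltonian vector field X_H(q,p) = (∂H/∂p_i(q,p), −∂H/∂q^i(q,p)) and the projected vector field X_H^γ(q) with components (X_H^γ)^i(q) = ∂H/∂p_i(q, γ(q)). Then the following are equivalent: (1) X_H and X_H^γ are γ-related, i.e. for every q ∈ ℝ^n the derivative of the map q ↦ (q, γ(q)) applied to X_H^γ(q) equals X_H(q, γ(q)) (equivalently, Σ_j ∂γ_i/∂q^j(q) · ∂H/∂p_j(q,γ(q)) = −∂H/∂q^i(q,γ(q)) for all i); (2) d(H∘γ) = 0, i.e. the function q ↦ H(q, γ(q)) has identically vanishing derivative. -/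

import Mathlib

section Aux

variable {n : ℕ}

private lemma clm_sum (T : (Fin n → ℝ) →L[ℝ] ℝ) (v : Fin n → ℝ) :
    T v = ∑ i, v i * T (Pi.single i 1) := by
  have h := (T : (Fin n → ℝ) →ₗ[ℝ] ℝ).pi_apply_eq_sum_univ v
  simp only [ContinuousLinearMap.coe_coe] at h
  rw [h]
  refine Finset.sum_congr rfl fun i _ => ?_
  rw [smul_eq_mul]
  refine congrArg (fun x => v i * T x) ?_
  funext j
  simp [Pi.single_apply, eq_comm]

private lemma clm_prod_split (T : ((Fin n → ℝ) × (Fin n → ℝ)) →L[ℝ] ℝ)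
    (v w : Fin n → ℝ) : T (v, w) = T (v, 0) + T (0, w) := by
  rw [← map_add]
  simp

private lemma sum_swap_mul (A : Fin n → Fin n → ℝ) (hA : ∀ i j, A i j = A j i)
    (v B : Fin n → ℝ) :
    ∑ i, (∑ j, v j * A i j) * B i = ∑ j, v j * (∑ i, B i * A j i) := by
  calc ∑ i, (∑ j, v j * A i j) * B i
      = ∑ i, ∑ j, v j * (B i * A j i) := by
        refine Finset.sum_congr rfl fun i _ => ?_
        rw [Finset.sum_mul]
        exact Finset.sum_congr rfl fun j _ => by rw [hA i j]; ring
    _ = ∑ j, ∑ i, v j * (B i * A j i) := Finset.sum_comm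
    _ = ∑ j, v j * (∑ i, B i * A j i) := by
        exact Finset.sum_congr rfl fun j _ => (Finset.mul_sum _ _ _).symm

private lemma smooth_gamma {W : (Fin n → ℝ) → ℝ} (hW : ContDiff ℝ (⊤ : ℕ∞) W)
    {γ : (Fin n → ℝ) → Fin n → ℝ}
    (hγ : ∀ q i, γ q i = fderiv ℝ W q (Pi.single i 1)) :
    ContDiff ℝ (⊤ : ℕ∞) γ := by
  have hdW : ContDiff ℝ (⊤ : ℕ∞) (fderiv ℝ W) :=
    hW.fderiv_right (m := (⊤ : ℕ∞)) (by norm_num)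
  rw [contDiff_pi]
  intro i
  have h : (fun q => γ q i)
      = fun q => (ContinuousLinearMap.apply ℝ ℝ (Pi.single i 1)) (fderiv ℝ W q) := by
    funext q; simp [hγ]
  rw [h]
  exact (ContinuousLinearMap.apply ℝ ℝ (Pi.single i 1)).contDiff.comp hdW

end Aux

/-!
Geometric Hamilton–Jacobi theorem for time-independent symplectic mechanics on
`T*ℝⁿ ≅ ℝⁿ × ℝⁿ` with coordinates `(qⁱ, pᵢ)`.  For a smooth Hamiltonian `H` and
`γ = dW` the exterior derivative of a smooth `W : ℝⁿ → ℝ`, the Hamiltonian vector field is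
`X_H(q,p) = (∂H/∂pᵢ, −∂H/∂qⁱ)` and the projected vector field is
`X_H^γ(q) = (∂H/∂pᵢ)(q, γ(q))`.  Then `X_H` and `X_H^γ` are `γ`-related (the tangent map of
the section `q ↦ (q, γ(q))` sends `X_H^γ(q)` to `X_H(q, γ(q))`) if and only if
`d(H ∘ γ) = 0`. -/
theorem hamilton_jacobi_symplectic (n : ℕ)
    (H : (Fin n → ℝ) × (Fin n → ℝ) → ℝ) (hH : ContDiff ℝ (⊤ : ℕ∞) H)
    (W : (Fin n → ℝ) → ℝ) (hW : ContDiff ℝ (⊤ : ℕ∞) W)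
    (γ : (Fin n → ℝ) → Fin n → ℝ)
    (hγ : ∀ (q : Fin n → ℝ) (i : Fin n), γ q i = fderiv ℝ W q (Pi.single i 1)) :
    -- (1) `X_H` and `X_H^γ` are `γ`-related: `Tγ ∘ X_H^γ = X_H ∘ γ`
    (∀ q : Fin n → ℝ,
        fderiv ℝ (fun y : Fin n → ℝ => ((y, γ y) : (Fin n → ℝ) × (Fin n → ℝ))) q
            (fun i => fderiv ℝ H (q, γ q) (0, Pi.single i 1)) =
          ((fun i => fderiv ℝ H (q, γ q) (0, Pi.single i 1)),
           (fun i => -fderiv ℝ H (q, γ q) (Pi.single i 1, 0)))) ↔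
    -- (2) `d(H ∘ γ) = 0`
    (∀ q : Fin n → ℝ, fderiv ℝ (fun y => H (y, γ y)) q = 0) := by
  classical
  have hγs : ContDiff ℝ (⊤ : ℕ∞) γ := smooth_gamma hW hγ
  have hγd : ∀ q, DifferentiableAt ℝ γ q :=
    fun q => (hγs.differentiable (by norm_num)) q
  have hdW : ContDiff ℝ (⊤ : ℕ∞) (fderiv ℝ W) :=
    hW.fderiv_right (m := (⊤ : ℕ∞)) (by norm_num)
  have hdWd : ∀ q, DifferentiableAt ℝ (fderiv ℝ W) q :=
    fun q => (hdW.differentiable (by norm_num)) q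
  have hHd : ∀ z, DifferentiableAt ℝ H z :=
    fun z => (hH.differentiable (by norm_num)) z
  -- derivative of the section q ↦ (q, γ q)
  have hsec : ∀ q, HasFDerivAt (fun y : Fin n → ℝ => ((y, γ y)))
      ((ContinuousLinearMap.id ℝ (Fin n → ℝ)).prod (fderiv ℝ γ q)) q :=
    fun q => HasFDerivAt.prodMk (hasFDerivAt_id q) (hγd q).hasFDerivAt
  have hsecv : ∀ q (v : Fin n → ℝ),
      fderiv ℝ (fun y : Fin n → ℝ => ((y, γ y) : (Fin n → ℝ) × (Fin n → ℝ))) q v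
        = (v, fderiv ℝ γ q v) := by
    intro q v
    rw [(hsec q).fderiv]
    rfl
  -- components of Dγ are second derivatives of W
  have hcomp : ∀ q (v : Fin n → ℝ) i,
      fderiv ℝ γ q v i = fderiv ℝ (fderiv ℝ W) q v (Pi.single i 1) := by
    intro q v i
    have h : (fun y => γ y i)
        = (ContinuousLinearMap.apply ℝ ℝ (Pi.single i 1)) ∘ (fderiv ℝ W) := by
      funext y; simp [hγ, Function.comp]
    have hcompd : ∀ i, DifferentiableAt ℝ (fun y => γ y i) q := by
      intro i
      have h' : (fun y => γ y i)
          = (ContinuousLinearMap.apply ℝ ℝ (Pi.single i 1)) ∘ (fderiv ℝ W) := by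
        funext y; simp [hγ, Function.comp]
      rw [h']
      exact (ContinuousLinearMap.apply ℝ ℝ (Pi.single i 1)).differentiableAt.comp q (hdWd q)
    have h1 : fderiv ℝ γ q v i = fderiv ℝ (fun y => γ y i) q v := by
      have := fderiv_pi (𝕜 := ℝ) (φ := fun i (y : Fin n → ℝ) => γ y i) (x := q) hcompd
      have h2 : (fun (y : Fin n → ℝ) (i : Fin n) => γ y i) = γ := rfl
      rw [h2] at this
      rw [this, ContinuousLinearMap.pi_apply]
    rw [h1, h]
    rw [((ContinuousLinearMap.apply ℝ ℝ (Pi.single i 1)).hasFDerivAt.comp q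
      (hdWd q).hasFDerivAt).fderiv]
    rfl
  -- symmetry of second derivative of W
  have hsym : ∀ q (v w : Fin n → ℝ),
      fderiv ℝ (fderiv ℝ W) q v w = fderiv ℝ (fderiv ℝ W) q w v := by
    intro q
    refine (hW.contDiffAt.isSymmSndFDerivAt ?_).eq
    rw [show ((2 : WithTop ℕ∞)) = (((2 : ℕ∞)) : WithTop ℕ∞) from rfl]
    rw [minSmoothness_of_isRCLikeNormedField]
    exact WithTop.coe_le_coe.2 le_top
  -- symmetrized component formula for Dγ
  have e3 : ∀ q (v : Fin n → ℝ) i, fderiv ℝ γ q v i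
      = ∑ j, v j * fderiv ℝ (fderiv ℝ W) q (Pi.single i 1) (Pi.single j 1) := by
    intro q v i
    rw [hcomp]
    have := clm_sum ((ContinuousLinearMap.apply ℝ ℝ (Pi.single i 1)).comp
      (fderiv ℝ (fderiv ℝ W) q)) v
    simp only [ContinuousLinearMap.comp_apply, ContinuousLinearMap.apply_apply] at this
    rw [this]
    exact Finset.sum_congr rfl fun j _ => by rw [hsym]
  -- expansions of fderiv H over the two factors
  have e1 : ∀ q (w : Fin n → ℝ), fderiv ℝ H (q, γ q) ((0 : Fin n → ℝ), w)
      = ∑ j, w j * fderiv ℝ H (q, γ q) (0, Pi.single j 1) := by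
    intro q w
    have := clm_sum ((fderiv ℝ H (q, γ q)).comp
      (ContinuousLinearMap.inr ℝ (Fin n → ℝ) (Fin n → ℝ))) w
    simpa using this
  have e2 : ∀ q (v : Fin n → ℝ), fderiv ℝ H (q, γ q) (v, (0 : Fin n → ℝ))
      = ∑ i, v i * fderiv ℝ H (q, γ q) (Pi.single i 1, 0) := by
    intro q v
    have := clm_sum ((fderiv ℝ H (q, γ q)).comp
      (ContinuousLinearMap.inl ℝ (Fin n → ℝ) (Fin n → ℝ))) v
    simpa using this
  -- derivative of H ∘ section
  have hHsec : ∀ q, fderiv ℝ (fun y => H (y, γ y)) q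
      = (fderiv ℝ H (q, γ q)).comp
          ((ContinuousLinearMap.id ℝ (Fin n → ℝ)).prod (fderiv ℝ γ q)) := by
    intro q
    exact (((hHd (q, γ q)).hasFDerivAt).comp q (hsec q)).fderiv
  constructor
  · intro h1 q
    have h1q := h1 q
    rw [hsecv] at h1q
    have h1q' := congrArg Prod.snd h1q
    simp only at h1q'
    have key : ∀ i, fderiv ℝ γ q (fun j => fderiv ℝ H (q, γ q) (0, Pi.single j 1)) i
        = -fderiv ℝ H (q, γ q) (Pi.single i 1, 0) := fun i => congrFun h1q' i
    have key' : ∀ i, (∑ j, fderiv ℝ H (q, γ q) (0, Pi.single j 1)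
          * fderiv ℝ (fderiv ℝ W) q (Pi.single i 1) (Pi.single j 1))
        = -fderiv ℝ H (q, γ q) (Pi.single i 1, 0) := by
      intro i
      rw [← key i, e3]
    rw [hHsec q]
    ext v
    rw [ContinuousLinearMap.comp_apply, ContinuousLinearMap.zero_apply]
    have hv : ((ContinuousLinearMap.id ℝ (Fin n → ℝ)).prod (fderiv ℝ γ q)) v
        = (v, fderiv ℝ γ q v) := rfl
    rw [hv, clm_prod_split, e1 q (fderiv ℝ γ q v), e2 q v]
    have hrw : ∑ i, fderiv ℝ γ q v i * fderiv ℝ H (q, γ q) (0, Pi.single i 1)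
        = ∑ j, v j * (∑ i, fderiv ℝ H (q, γ q) (0, Pi.single i 1)
            * fderiv ℝ (fderiv ℝ W) q (Pi.single j 1) (Pi.single i 1)) := by
      rw [show (∑ i, fderiv ℝ γ q v i * fderiv ℝ H (q, γ q) (0, Pi.single i 1))
          = ∑ i, (∑ j, v j * fderiv ℝ (fderiv ℝ W) q (Pi.single i 1) (Pi.single j 1))
              * fderiv ℝ H (q, γ q) (0, Pi.single i 1) from
        Finset.sum_congr rfl fun i _ => by rw [e3]]
      exact sum_swap_mul _ (fun i j => hsym q _ _) _ _
    rw [hrw]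
    rw [← Finset.sum_add_distrib]
    refine Finset.sum_eq_zero fun j _ => ?_
    rw [key' j]
    ring
  · intro h2 q
    rw [hsecv]
    refine Prod.ext rfl ?_
    funext i
    simp only
    have h2q := h2 q
    rw [hHsec q] at h2q
    have h2i : fderiv ℝ H (q, γ q)
        (Pi.single i 1, fderiv ℝ γ q (Pi.single i 1)) = 0 := by
      have := congrFun (congrArg DFunLike.coe h2q) (Pi.single i 1)
      simpa using this
    rw [clm_prod_split, e1 q (fderiv ℝ γ q (Pi.single i 1))] at h2i
    have hh : ∑ j, fderiv ℝ γ q (Pi.single i 1) j * fderiv ℝ H (q, γ q) (0, Pi.single j 1)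
        = -fderiv ℝ H (q, γ q) (Pi.single i 1, 0) := by linarith [h2i]
    have hkey : ∑ j, fderiv ℝ H (q, γ q) (0, Pi.single j 1)
          * fderiv ℝ (fderiv ℝ W) q (Pi.single i 1) (Pi.single j 1)
        = -fderiv ℝ H (q, γ q) (Pi.single i 1, 0) := by
      rw [← hh]
      refine Finset.sum_congr rfl fun j _ => ?_
      rw [e3 q (Pi.single i 1) j, Finset.sum_mul, Finset.sum_eq_single i
        (fun k _ hk => by rw [Pi.single_eq_of_ne hk]; ring)
        (fun hi => absurd (Finset.mem_univ i) hi)]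
      rw [Pi.single_eq_same, hsym]
      ring
    rw [show fderiv ℝ γ q (fun j => fderiv ℝ H (q, γ q) (0, Pi.single j 1)) i
        = ∑ j, fderiv ℝ H (q, γ q) (0, Pi.single j 1)
            * fderiv ℝ (fderiv ℝ W) q (Pi.single i 1) (Pi.single j 1) from e3 q _ i]
    exact hkey
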